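/- arXiv:0812.1898 — 8 statements merged into one kernel-verified Lean document; each statement's English description precedes it below -/
import Mathlib

section
/- There exists an infinitely large element of K: there is some s : K such that f r < s for every real number r (equivalently, s is positive and not limited). Consequently there also exist infinitely large elements of K. -/
theorem exists_infinitely_large {K : Type*} [Field K] [LinearOrder K] [IsStrictOrderedRing K]
    (f : ℝ →+* K) (hf : ¬ Function.Surjective f) :
    ∃ s : K, ∀ r : ℝ, f r < s := by
  have hmono : StrictMono f := by
    intro x y hxy
    have hne : f (y - x) ≠ 0 := by
      intro h
      have : y - x = 0 := f.injective (by rw [h, map_zero])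
      linarith [sub_pos.2 hxy]
    have hsq : y - x = (Real.sqrt (y - x)) ^ 2 :=
      (Real.sq_sqrt (le_of_lt (sub_pos.2 hxy))).symm
    have hpos : (0 : K) < f (y - x) := by
      rw [hsq, map_pow]
      exact lt_of_le_of_ne (sq_nonneg _) (by rw [← map_pow, ← hsq]; exact hne.symm)
    have : f y - f x = f (y - x) := by rw [map_sub]
    linarith
  by_contra h
  push_neg at h
  apply hf
  intro s
  -- every element of K is bounded above by some f r
  set A : Set ℝ := {r : ℝ | f r ≤ s} with hA
  have hAne : A.Nonempty := by
    obtain ⟨r, hr⟩ := h (-s)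
    exact ⟨-r, by simpa [hA] using neg_le.2 hr⟩
  have hAbdd : BddAbove A := by
    obtain ⟨r, hr⟩ := h s
    exact ⟨r, fun a ha => hmono.le_iff_le.mp (le_trans ha hr)⟩
  set c := sSup A with hc
  set d := s - f c with hd
  -- d is infinitesimal
  have hinf : ∀ ε : ℝ, 0 < ε → |d| < f ε := by
    intro ε hε
    have hεpos : (0 : K) < f ε := by
      have := hmono hε
      simpa using this
    rw [abs_lt]
    constructor
    · -- -f ε < d, i.e. f (c - ε) < s
      have h1 : c - ε / 2 < c := by linarith
      obtain ⟨a, haA, ha⟩ := exists_lt_of_lt_csSup hAne h1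
      have h2 : f (c - ε) < f a := hmono (by linarith)
      have h3 : f (c - ε) = f c - f ε := by rw [map_sub]
      have := lt_of_lt_of_le h2 haA
      rw [h3] at this
      linarith
    · -- d < f ε, i.e. s < f (c + ε)
      by_contra hcon
      push_neg at hcon
      have : f (c + ε) ≤ s := by
        rw [map_add]
        linarith
      have : c + ε ≤ c := le_csSup hAbdd this
      linarith
  -- d must be zero
  have hd0 : d = 0 := by
    by_contra hdne
    have hdpos : (0 : K) < |d| := abs_pos.2 hdne
    obtain ⟨r, hr⟩ := h |d|⁻¹
    have hfr : (0 : K) < f r := lt_of_lt_of_le (inv_pos.2 hdpos) hr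
    have hrpos : (0 : ℝ) < r := by
      by_contra hrn
      push_neg at hrn
      have : f r ≤ f 0 := hmono.le_iff_le.mpr hrn
      simp at this
      linarith
    have h1 : |d| < f (1 / r) := hinf _ (by positivity)
    have h2 : (f r)⁻¹ ≤ |d| := by
      rw [← inv_inv |d|]
      exact inv_anti₀ (inv_pos.2 hdpos) hr
    have h3 : (1 : K) ≤ |d| * f r := by
      calc (1 : K) = (f r)⁻¹ * f r := (inv_mul_cancel₀ (ne_of_gt hfr)).symm
        _ ≤ |d| * f r := by exact mul_le_mul_of_nonneg_right h2 (le_of_lt hfr)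
    have h4 : |d| * f r < f (1 / r) * f r := mul_lt_mul_of_pos_right h1 hfr
    have h5 : f (1 / r) * f r = 1 := by
      rw [← map_mul, one_div, inv_mul_cancel₀ (ne_of_gt hrpos), map_one]
    linarith
  exact ⟨c, by linarith [hd0, hd ▸ hd0]⟩
end

section
/- There exists a nonzero infinitesimal element of K: there is some ε : K with ε ≠ 0 such that |ε| < f r for every real number r > 0. -/
theorem exists_nonzero_infinitesimal {K : Type*} [Field K] [LinearOrder K] [IsStrictOrderedRing K]
    (f : ℝ →+* K) (hf : ¬ Function.Surjective f) :
    ∃ ε : K, ε ≠ 0 ∧ ∀ r : ℝ, 0 < r → |ε| < f r := by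
  have hmono : Monotone f := ringHom_monotone (fun r hr => ⟨Real.sqrt r, (Real.mul_self_sqrt hr).symm⟩) f
  have hsm : StrictMono f := hmono.strictMono_of_injective f.injective
  obtain ⟨x, hx⟩ := not_forall.mp hf
  push_neg at hx
  by_cases hlim : ∃ r : ℝ, 0 < r ∧ |x| ≤ f r
  · -- x limited: use sSup of {r | f r < x}
    obtain ⟨r0, hr0, hxr0⟩ := hlim
    set S : Set ℝ := {r | f r < x}
    have hne : S.Nonempty := by
      refine ⟨-r0 - 1, ?_⟩
      have h1 : f (-r0 - 1) < f (-r0) := hsm (by linarith)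
      have h2 : f (-r0) ≤ x := by
        have := neg_abs_le x
        simpa [map_neg] using le_trans (by simpa [map_neg] using neg_le_neg hxr0) this
      exact lt_of_lt_of_le h1 h2
    have hbdd : BddAbove S := by
      refine ⟨r0, fun s hs => ?_⟩
      by_contra h
      push_neg at h
      exact absurd (lt_of_le_of_lt (le_trans (le_abs_self x) hxr0) (hsm h)) (not_lt.mpr hs.le)
    set c := sSup S
    refine ⟨x - f c, sub_ne_zero.mpr (fun h => hx c h.symm), fun r hr => ?_⟩
    rw [abs_lt]
    constructor
    · -- f c - x < f r, i.e. f (c - r) < x impossible to fail: show x > f c - f r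
      by_contra h
      push_neg at h
      have hub : c - r ∈ upperBounds S := by
        intro s hs
        have : f s < f (c - r) := by
          rw [map_sub]
          calc f s < x := hs
            _ ≤ f c - f r := by linarith
        exact (hsm.lt_iff_lt.mp this).le
      have := csSup_le hne hub
      linarith
    · -- x - f c < f r
      by_contra h
      push_neg at h
      have hmem : c + r / 2 ∈ S := by
        show f (c + r / 2) < x
        have h1 : f (r / 2) < f r := hsm (by linarith)
        rw [map_add]
        linarith
      have := le_csSup hbdd hmem
      linarith
  · -- x infinitely large: use x⁻¹
    push_neg at hlim
    have hxbig : ∀ r : ℝ, 0 < r → f r < |x| := fun r hr => hlim r hr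
    have hx0 : (0 : K) < |x| := lt_trans (by simpa using hsm one_pos) (hxbig 1 one_pos)
    refine ⟨x⁻¹, inv_ne_zero (abs_pos.mp hx0), fun r hr => ?_⟩
    rw [abs_inv]
    have h1 : f r⁻¹ < |x| := hxbig r⁻¹ (inv_pos.mpr hr)
    have h2 : (0 : K) < f r⁻¹ := by simpa using hsm (inv_pos.mpr hr)
    have := inv_strictAnti₀ h2 h1
    rwa [← map_inv₀, inv_inv] at this
end

section
/- There exists a function st : K → ℝ such that: (i) for every limited s : K, the element s - f (st s) is infinitesimal; (ii) st is additive on limited elements, i.e. st (s + t) = st s + st t whenever s and t are limited; (iii) st maps the set of limited elements onto ℝ (indeed st (f r) = r for every real r); and (iv) for limited s, st s = 0 if and only if s is infinitesimal. Consequently, the quotient of the additive group Gal(0) of limited elements of K by the additive subgroup Hal(0) of infinitesimal elements is isomorphic, as an additive group, to ℝ. -/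
variable {K : Type*} [Field K] [LinearOrder K] [IsStrictOrderedRing K]

/-- `s : K` is infinitesimal: `|s| < f r` for every real `r > 0`. -/
def IsInfinitesimal (f : ℝ →+* K) (s : K) : Prop := ∀ r : ℝ, 0 < r → |s| < f r

/-- `s : K` is limited: `|s| ≤ f r` for some real `r > 0`. -/
def IsLimited (f : ℝ →+* K) (s : K) : Prop := ∃ r : ℝ, 0 < r ∧ |s| ≤ f r

lemma map_pos_of_pos' (f : ℝ →+* K) {r : ℝ} (hr : 0 < r) : 0 < f r := by
  have h : f r = f (Real.sqrt r) ^ 2 := by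
    rw [← map_pow, sq, Real.mul_self_sqrt hr.le]
  have h0 : f r ≠ 0 := fun h' => hr.ne' (f.injective (by simpa using h'))
  have : 0 ≤ f r := h ▸ sq_nonneg _
  exact lt_of_le_of_ne this (Ne.symm h0)

/-- `Gal(0)`: the additive subgroup of limited elements of `K`. -/
def Gal0 (f : ℝ →+* K) : AddSubgroup K where
  carrier := {s | IsLimited f s}
  zero_mem' := ⟨1, one_pos, by simp⟩
  add_mem' := by
    rintro a b ⟨r, hr, ha⟩ ⟨r', hr', hb⟩
    exact ⟨r + r', by positivity, by
      calc |a + b| ≤ |a| + |b| := abs_add_le a b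
        _ ≤ f r + f r' := add_le_add ha hb
        _ = f (r + r') := (map_add f r r').symm⟩
  neg_mem' := by
    rintro a ⟨r, hr, ha⟩
    exact ⟨r, hr, by simpa using ha⟩

/-- `Hal(0)`: the additive subgroup of `Gal(0)` consisting of infinitesimal elements. -/
def Hal0 (f : ℝ →+* K) : AddSubgroup (Gal0 f) where
  carrier := {s | IsInfinitesimal f (s : K)}
  zero_mem' := by
    intro r hr
    simpa using map_pos_of_pos' f hr
  add_mem' := by
    rintro a b ha hb r hr
    have h2 : (0:ℝ) < r / 2 := by positivity
    calc |((a + b : Gal0 f) : K)| ≤ |(a : K)| + |(b : K)| := abs_add_le _ _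
      _ < f (r / 2) + f (r / 2) := add_lt_add (ha _ h2) (hb _ h2)
      _ = f r := by rw [← map_add]; norm_num
  neg_mem' := by
    rintro a ha r hr
    simpa using ha r hr


lemma f_strictMono (f : ℝ →+* K) : StrictMono f := fun a b h => by
  have := map_pos_of_pos' f (sub_pos.mpr h)
  rw [map_sub] at this; linarith

lemma f_abs (f : ℝ →+* K) (a : ℝ) : |f a| = f |a| := by
  rcases le_or_gt 0 a with h | h
  · rw [abs_of_nonneg h, abs_of_nonneg]
    have := (f_strictMono f).monotone h; simpa using this
  · rw [abs_of_neg h, abs_of_neg, map_neg]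
    have := f_strictMono f h; simpa using this

lemma isInf_f_eq_zero (f : ℝ →+* K) {a : ℝ} (h : IsInfinitesimal f (f a)) : a = 0 := by
  by_contra ha
  have := h |a| (abs_pos.mpr ha)
  rw [f_abs] at this
  exact lt_irrefl _ this

lemma isInf_neg (f : ℝ →+* K) {a : K} (h : IsInfinitesimal f a) :
    IsInfinitesimal f (-a) := fun r hr => by simpa using h r hr

lemma isInf_add (f : ℝ →+* K) {a b : K} (ha : IsInfinitesimal f a)
    (hb : IsInfinitesimal f b) : IsInfinitesimal f (a + b) := fun r hr => by
  have h2 : (0:ℝ) < r / 2 := by positivity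
  calc |a + b| ≤ |a| + |b| := abs_add_le a b
    _ < f (r / 2) + f (r / 2) := add_lt_add (ha _ h2) (hb _ h2)
    _ = f r := by rw [← map_add]; norm_num

lemma isInf_sub (f : ℝ →+* K) {a b : K} (ha : IsInfinitesimal f a)
    (hb : IsInfinitesimal f b) : IsInfinitesimal f (a - b) := by
  rw [sub_eq_add_neg]; exact isInf_add f ha (isInf_neg f hb)

noncomputable def stFun (f : ℝ →+* K) (s : K) : ℝ := sSup {r : ℝ | f r ≤ s}

lemma st_spec (f : ℝ →+* K) {s : K} (hs : IsLimited f s) :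
    IsInfinitesimal f (s - f (stFun f s)) := by
  obtain ⟨r0, hr0, habs⟩ := hs
  obtain ⟨h1, h2⟩ := abs_le.mp habs
  set A := {r : ℝ | f r ≤ s} with hA
  have hne : A.Nonempty := ⟨-r0, show f (-r0) ≤ s by rw [map_neg]; exact h1⟩
  have hbdd : BddAbove A := ⟨r0, fun r hr =>
    ((f_strictMono f).le_iff_le).mp (hr.trans h2)⟩
  set L := stFun f s with hL
  intro ε hε
  have hLdef : L = sSup A := rfl
  obtain ⟨r, hrA, hrL⟩ := exists_lt_of_lt_csSup hne (show L - ε < sSup A by rw [← hLdef]; linarith)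
  have hlow : f (L - ε) < s := lt_of_lt_of_le (f_strictMono f hrL) hrA
  have hupp : s < f (L + ε) := by
    by_contra h
    push_neg at h
    have : L + ε ≤ sSup A := le_csSup hbdd h
    rw [← hLdef] at this
    linarith
  rw [map_sub] at hlow
  rw [map_add] at hupp
  rw [abs_lt]
  constructor <;> [linarith; linarith]

lemma st_f (f : ℝ →+* K) (r : ℝ) : stFun f (f r) = r := by
  have hlim : IsLimited f (f r) := ⟨|r| + 1, by positivity, by
    rw [f_abs]; exact ((f_strictMono f).monotone (by linarith [abs_nonneg r]))⟩
  have := st_spec f hlim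
  rw [← map_sub] at this
  have := isInf_f_eq_zero f this
  linarith

lemma st_add (f : ℝ →+* K) {s t : K} (hs : IsLimited f s) (ht : IsLimited f t) :
    stFun f (s + t) = stFun f s + stFun f t := by
  have hst : IsLimited f (s + t) := (Gal0 f).add_mem hs ht
  have i1 := st_spec f hs
  have i2 := st_spec f ht
  have i3 := st_spec f hst
  have key : IsInfinitesimal f (f (stFun f s + stFun f t - stFun f (s + t))) := by
    have := isInf_sub f (isInf_sub f i3 i1) i2
    have heq : s + t - f (stFun f (s + t)) - (s - f (stFun f s)) - (t - f (stFun f t))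
        = f (stFun f s + stFun f t - stFun f (s + t)) := by
      rw [map_sub, map_add]; ring
    rw [heq] at this
    exact this
  have := isInf_f_eq_zero f key
  linarith

lemma st_zero_iff (f : ℝ →+* K) {s : K} (hs : IsLimited f s) :
    stFun f s = 0 ↔ IsInfinitesimal f s := by
  constructor
  · intro h
    have := st_spec f hs
    rw [h, map_zero, sub_zero] at this
    exact this
  · intro h
    have h2 := st_spec f hs
    have : IsInfinitesimal f (f (stFun f s)) := by
      have := isInf_sub f h h2
      simpa using this
    exact isInf_f_eq_zero f this

theorem standard_part_exists (f : ℝ →+* K) (hf : ¬ Function.Surjective f) :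
    (∃ st : K → ℝ,
      (∀ s : K, IsLimited f s → IsInfinitesimal f (s - f (st s))) ∧
      (∀ s t : K, IsLimited f s → IsLimited f t → st (s + t) = st s + st t) ∧
      (∀ r : ℝ, st (f r) = r) ∧
      (∀ s : K, IsLimited f s → (st s = 0 ↔ IsInfinitesimal f s))) ∧
    Nonempty ((Gal0 f ⧸ Hal0 f) ≃+ ℝ) := by
  constructor
  · exact ⟨stFun f, fun s hs => st_spec f hs, fun s t hs ht => st_add f hs ht,
      st_f f, fun s hs => st_zero_iff f hs⟩
  · let φ : Gal0 f →+ ℝ :=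
      { toFun := fun s => stFun f (s : K)
        map_zero' := by simpa using st_f f 0
        map_add' := fun a b => st_add f a.2 b.2 }
    have hsurj : Function.Surjective φ := fun r =>
      ⟨⟨f r, |r| + 1, by positivity, by
        rw [f_abs]; exact (f_strictMono f).monotone (by linarith [abs_nonneg r])⟩,
        st_f f r⟩
    have hker : φ.ker = Hal0 f := by
      ext a
      simp only [AddMonoidHom.mem_ker]
      exact st_zero_iff f a.2
    exact ⟨(QuotientAddGroup.quotientAddEquivOfEq hker.symm).trans
      (QuotientAddGroup.quotientKerEquivOfSurjective φ hsurj)⟩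
end

section
/- (Universality: every galactic space is the galactic projection of a K-metric space.) Let (δ, Δ) be galactic space data on a type F. Then there exists a K-valued distance d : F → F → K satisfying the general metric rule (d x x = 0; 0 < d x y for x ≠ y; d x y = d y x; d x z ≤ d x y + d y z) such that: (a) for all x y with δ x y ≠ ⊤, the element d x y - f ((δ x y).toReal) is infinitesimal (so the standard part of d x y equals the real value of δ x y); and (b) for all x y, the element d x y - Δ x y is limited (so d x y lies in the galaxy Δ x y). -/
open ENNReal

variable {K : Type*} [Field K] [LinearOrder K] [IsStrictOrderedRing K]

/-- Galactic space data on a type `F`: an extended distance `δ` together with a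
galaxy-valued distance `Δ` between metric components, encoded on points. -/
structure GalacticData (K : Type*) [Field K] [LinearOrder K] [IsStrictOrderedRing K] (f : ℝ →+* K) (F : Type*) where
  δ : F → F → ℝ≥0∞
  Δ : F → F → K
  δ_self : ∀ x, δ x x = 0
  δ_pos : ∀ x y, x ≠ y → 0 < δ x y
  δ_symm : ∀ x y, δ x y = δ y x
  δ_triangle : ∀ x y z, δ x z ≤ δ x y + δ y z
  Δ_congr : ∀ x x' y y', δ x x' ≠ ⊤ → δ y y' ≠ ⊤ → IsLimited f (Δ x y - Δ x' y')
  Δ_symm : ∀ x y, IsLimited f (Δ x y - Δ y x)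
  Δ_limited_iff : ∀ x y, IsLimited f (Δ x y) ↔ δ x y ≠ ⊤
  Δ_pos : ∀ x y, δ x y = ⊤ → 0 < Δ x y
  Δ_triangle : ∀ x y z, Δ x z ≤ Δ x y + Δ y z ∨ IsLimited f (Δ x z - (Δ x y + Δ y z))

namespace GalacticAux

variable (f : ℝ →+* K)

lemma lof_nonneg {r : ℝ} (hr : 0 ≤ r) : 0 ≤ f r := by
  have h : f r = f (Real.sqrt r) ^ 2 := by
    rw [← map_pow, Real.sq_sqrt hr]
  rw [h]
  positivity

lemma lof_mono {a b : ℝ} (h : a ≤ b) : f a ≤ f b := by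
  have := lof_nonneg f (sub_nonneg.2 h)
  rw [map_sub] at this
  linarith

lemma lof_pos {r : ℝ} (hr : 0 < r) : 0 < f r := by
  rcases (lof_nonneg f hr.le).lt_or_eq with h | h
  · exact h
  · exact absurd (f.injective (by rw [map_zero, ← h])) hr.ne

lemma lof_abs (a : ℝ) : |f a| = f |a| := by
  rcases le_or_gt 0 a with h | h
  · rw [abs_of_nonneg h, abs_of_nonneg (lof_nonneg f h)]
  · have h1 : 0 ≤ f (-a) := lof_nonneg f (neg_nonneg.2 h.le)
    rw [map_neg] at h1
    rw [abs_of_neg h, map_neg, abs_of_nonpos (by linarith)]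

lemma lim_zero : IsLimited f 0 :=
  ⟨1, one_pos, by simpa using lof_nonneg f zero_le_one⟩

lemma lim_add {a b : K} (ha : IsLimited f a) (hb : IsLimited f b) :
    IsLimited f (a + b) := by
  obtain ⟨r, hr, har⟩ := ha
  obtain ⟨s, hs, hbs⟩ := hb
  exact ⟨r + s, by linarith, by
    rw [map_add]
    calc |a + b| ≤ |a| + |b| := abs_add_le a b
    _ ≤ f r + f s := add_le_add har hbs⟩

lemma lim_neg {a : K} (ha : IsLimited f a) : IsLimited f (-a) := by
  obtain ⟨r, hr, har⟩ := ha
  exact ⟨r, hr, by rwa [abs_neg]⟩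

lemma lim_sub {a b : K} (ha : IsLimited f a) (hb : IsLimited f b) :
    IsLimited f (a - b) := by
  rw [sub_eq_add_neg]; exact lim_add f ha (lim_neg f hb)

lemma lim_half {a : K} (ha : IsLimited f a) : IsLimited f (a / 2) := by
  obtain ⟨r, hr, har⟩ := ha
  refine ⟨r, hr, ?_⟩
  rw [abs_div, abs_two]
  have h2 : (0:K) < 2 := two_pos
  have : |a| / 2 ≤ |a| := by
    have := abs_nonneg a
    linarith
  exact this.trans har

lemma lim_map (t : ℝ) : IsLimited f (f t) := by
  refine ⟨|t| + 1, by positivity, ?_⟩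
  rw [lof_abs]
  exact lof_mono f (by linarith [abs_nonneg t])

lemma lim_smul (q : ℚ) {a : K} (ha : IsLimited f a) : IsLimited f (q • a) := by
  obtain ⟨r, hr, har⟩ := ha
  refine ⟨(|(q:ℝ)| + 1) * r, by positivity, ?_⟩
  have hq : q • a = f (q:ℝ) * a := by
    rw [map_ratCast, Rat.smul_def]
  rw [hq, abs_mul, lof_abs, map_mul]
  have h1 : f |(q:ℝ)| ≤ f (|(q:ℝ)| + 1) := lof_mono f (by linarith)
  have h2 : (0:K) ≤ f |(q:ℝ)| := lof_nonneg f (abs_nonneg _)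
  exact mul_le_mul h1 har (abs_nonneg a) (le_trans h2 h1)

lemma posInf {s : K} (h0 : 0 < s) (hl : ¬ IsLimited f s) (r : ℝ) : f r < s := by
  have h1 : ¬ (|s| ≤ f (|r| + 1)) := fun hc => hl ⟨|r| + 1, by positivity, hc⟩
  push_neg at h1
  rw [abs_of_pos h0] at h1
  exact lt_of_le_of_lt (lof_mono f (by linarith [le_abs_self r])) h1

end GalacticAux

open GalacticAux in
/-- Every galactic space is the galactic projection of a `K`-metric space. -/
theorem galactic_space_is_projection (f : ℝ →+* K) (hf : ¬ Function.Surjective f)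
    {F : Type*} (G : GalacticData K f F) :
    ∃ d : F → F → K,
      (∀ x, d x x = 0) ∧
      (∀ x y, x ≠ y → 0 < d x y) ∧
      (∀ x y, d x y = d y x) ∧
      (∀ x y z, d x z ≤ d x y + d y z) ∧
      (∀ x y, G.δ x y ≠ ⊤ → IsInfinitesimal f (d x y - f (G.δ x y).toReal)) ∧
      (∀ x y, IsLimited f (d x y - G.Δ x y)) := by
  classical
  -- The submodule of limited elements
  set L : Submodule ℚ K :=
    { carrier := {x | IsLimited f x}
      add_mem' := fun ha hb => lim_add f ha hb
      zero_mem' := lim_zero f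
      smul_mem' := fun q a ha => lim_smul f q ha } with hL
  obtain ⟨Q, hQ⟩ := Submodule.exists_isCompl L
  set π := L.linearProjOfIsCompl Q hQ with hπ
  set σ : K → K := fun x => x - (π x : K) with hσ
  have hmemL : ∀ x : K, x ∈ L ↔ IsLimited f x := fun x => Iff.rfl
  have hσ_lim : ∀ x, IsLimited f (x - σ x) := by
    intro x
    have : x - σ x = (π x : K) := by rw [hσ]; ring
    rw [this]
    exact (hmemL _).mp (π x).2
  have hσ_zero : ∀ x, IsLimited f x → σ x = 0 := by
    intro x hx
    have h1 : π x = ⟨x, (hmemL x).mpr hx⟩ :=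
      Submodule.linearProjOfIsCompl_apply_left hQ ⟨x, (hmemL x).mpr hx⟩
    rw [hσ]
    simp only [h1]
    ring
  have hσ_add : ∀ a b, σ (a + b) = σ a + σ b := by
    intro a b
    simp only [hσ]
    rw [map_add]
    push_cast
    ring
  have hσ_sub : ∀ a b, σ (a - b) = σ a - σ b := by
    intro a b
    simp only [hσ]
    rw [map_sub]
    push_cast
    ring
  have hσ_congr : ∀ a b, IsLimited f (a - b) → σ a = σ b := by
    intro a b h
    have h0 := hσ_zero _ h
    rw [hσ_sub] at h0
    linarith
  have hσ_nonneg : ∀ v : K, 0 ≤ v → 0 ≤ σ v := by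
    intro v hv
    by_cases hl : IsLimited f v
    · rw [hσ_zero v hl]
    · obtain ⟨r, hr, hlr⟩ := hσ_lim v
      have h0 : 0 < v := by
        rcases hv.lt_or_eq with h | h
        · exact h
        · exact absurd (h ▸ lim_zero f) hl
      have h1 : f r < v := posInf f h0 hl r
      have h2 := le_abs_self (v - σ v)
      linarith
  have hσ_posInf : ∀ v : K, 0 < v → ¬ IsLimited f v → ∀ r : ℝ, f r < σ v := by
    intro v h0 hl r
    obtain ⟨r0, hr0, h1⟩ := hσ_lim v
    have h2 : f (r + r0) < v := posInf f h0 hl _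
    rw [map_add] at h2
    have h3 := le_abs_self (v - σ v)
    linarith
  -- basic δ facts
  have hne_self : ∀ x, G.δ x x ≠ ⊤ := by
    intro x; rw [G.δ_self]; exact ENNReal.zero_ne_top
  -- the symmetrized Δ
  set T : F → F → K := fun x y => (G.Δ x y + G.Δ y x) / 2 with hT
  have hT_symm : ∀ x y, T x y = T y x := by intro x y; simp only [hT]; ring
  have hT_sub_Δ : ∀ x y, IsLimited f (T x y - G.Δ x y) := by
    intro x y
    have h1 := lim_half f (G.Δ_symm y x)
    have he : T x y - G.Δ x y = (G.Δ y x - G.Δ x y) / 2 := by simp only [hT]; ring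
    rwa [he]
  have hT_posInf : ∀ x y, G.δ x y = ⊤ → ∀ r : ℝ, f r < T x y := by
    intro x y h r
    have hyx : G.δ y x = ⊤ := by rw [G.δ_symm y x]; exact h
    have h1 : f r < G.Δ x y :=
      posInf f (G.Δ_pos x y h) (fun hl => ((G.Δ_limited_iff x y).mp hl) h) r
    have h2 : f r < G.Δ y x :=
      posInf f (G.Δ_pos y x hyx) (fun hl => ((G.Δ_limited_iff y x).mp hl) hyx) r
    simp only [hT]
    linarith
  have hT_pos : ∀ x y, G.δ x y = ⊤ → 0 < T x y := by
    intro x y h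
    have := hT_posInf x y h 0
    rwa [map_zero] at this
  have hT_notlim : ∀ x y, G.δ x y = ⊤ → ¬ IsLimited f (T x y) := by
    intro x y h ⟨r, hr, habs⟩
    have h1 := hT_posInf x y h r
    have h2 := le_abs_self (T x y)
    linarith
  have hσT_posInf : ∀ x y, G.δ x y = ⊤ → ∀ r : ℝ, f r < σ (T x y) :=
    fun x y h => hσ_posInf _ (hT_pos x y h) (hT_notlim x y h)
  -- congruence of σ ∘ T along a finite edge
  have hσT_congr : ∀ x y z, G.δ x y ≠ ⊤ → σ (T x z) = σ (T y z) := by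
    intro x y z hxy
    apply hσ_congr
    have h1 := G.Δ_congr x y z z hxy (hne_self z)
    have h2 := G.Δ_congr z z x y (hne_self z) hxy
    have he : T x z - T y z = ((G.Δ x z - G.Δ y z) + (G.Δ z x - G.Δ z y)) / 2 := by
      simp only [hT]; ring
    rw [he]
    exact lim_half f (lim_add f h1 h2)
  -- the distance
  refine ⟨fun x y => if G.δ x y = ⊤ then σ (T x y) else f ((G.δ x y).toReal),
    ?_, ?_, ?_, ?_, ?_, ?_⟩
  · intro x
    dsimp only
    rw [if_neg (hne_self x), G.δ_self, ENNReal.toReal_zero, map_zero]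
  · intro x y hxy
    dsimp only
    by_cases h : G.δ x y = ⊤
    · rw [if_pos h]
      have := hσT_posInf x y h 0
      rwa [map_zero] at this
    · rw [if_neg h]
      exact lof_pos f (ENNReal.toReal_pos (G.δ_pos x y hxy).ne' h)
  · intro x y
    dsimp only
    rw [G.δ_symm x y, hT_symm x y]
  · intro x y z
    dsimp only
    by_cases hxz : G.δ x z = ⊤ <;> by_cases hxy : G.δ x y = ⊤ <;>
      by_cases hyz : G.δ y z = ⊤
    · -- all infinite
      rw [if_pos hxz, if_pos hxy, if_pos hyz]
      have key : 0 ≤ σ (T x y + T y z - T x z) := by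
        have e1 := G.Δ_triangle x y z
        have e2 := G.Δ_triangle z y x
        have hu : ∀ c : K, IsLimited f c → 0 ≤ T x y + T y z - T x z + c →
            0 ≤ σ (T x y + T y z - T x z) := by
          intro c hc hpos
          have := hσ_congr (T x y + T y z - T x z + c) (T x y + T y z - T x z)
            (by simpa using hc)
          rw [← this]
          exact hσ_nonneg _ hpos
        rcases e1 with e1 | e1 <;> rcases e2 with e2 | e2
        · refine hu 0 (lim_zero f) ?_
          simp only [hT]; push_cast; linarith
        · refine hu ((G.Δ z x - (G.Δ z y + G.Δ y x)) / 2) (lim_half f e2) ?_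
          simp only [hT]; linarith
        · refine hu ((G.Δ x z - (G.Δ x y + G.Δ y z)) / 2) (lim_half f e1) ?_
          simp only [hT]; linarith
        · refine hu ((G.Δ x z - (G.Δ x y + G.Δ y z)) / 2
            + (G.Δ z x - (G.Δ z y + G.Δ y x)) / 2)
            (lim_add f (lim_half f e1) (lim_half f e2)) ?_
          simp only [hT]; linarith
      rw [hσ_sub, hσ_add] at key
      linarith
    · -- δ x z = ⊤, δ x y = ⊤, δ y z ≠ ⊤
      rw [if_pos hxz, if_pos hxy, if_neg hyz]
      have hzy : G.δ z y ≠ ⊤ := by rw [G.δ_symm z y]; exact hyz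
      have h1 : σ (T z x) = σ (T y x) := hσT_congr z y x hzy
      have h2 : σ (T x z) = σ (T x y) := by
        rw [hT_symm x z, hT_symm x y, h1]
      rw [h2]
      have h3 : (0:K) ≤ f ((G.δ y z).toReal) := lof_nonneg f ENNReal.toReal_nonneg
      linarith
    · -- δ x z = ⊤, δ x y ≠ ⊤, δ y z = ⊤
      rw [if_pos hxz, if_neg hxy, if_pos hyz]
      have h1 : σ (T x z) = σ (T y z) := hσT_congr x y z hxy
      have h3 : (0:K) ≤ f ((G.δ x y).toReal) := lof_nonneg f ENNReal.toReal_nonneg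
      rw [h1]
      linarith
    · -- impossible: δ x z = ⊤ but both sides finite
      exact absurd hxz (lt_of_le_of_lt (G.δ_triangle x y z)
        (ENNReal.add_lt_top.mpr ⟨Ne.lt_top hxy, Ne.lt_top hyz⟩)).ne
    · -- δ x z ≠ ⊤, δ x y = ⊤, δ y z = ⊤
      rw [if_neg hxz, if_pos hxy, if_pos hyz]
      have h1 : f ((G.δ x z).toReal) < σ (T x y) := hσT_posInf x y hxy _
      have h2 : (0:K) < σ (T y z) := by
        have := hσT_posInf y z hyz 0
        rwa [map_zero] at this
      linarith
    · -- impossible: δ x y = ⊤ but δ x z, δ y z finite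
      have h : G.δ x y ≤ G.δ x z + G.δ y z := by
        rw [← G.δ_symm z y]; exact G.δ_triangle x z y
      exact absurd hxy (lt_of_le_of_lt h
        (ENNReal.add_lt_top.mpr ⟨Ne.lt_top hxz, Ne.lt_top hyz⟩)).ne
    · -- impossible: δ y z = ⊤ but δ x y, δ x z finite
      have h : G.δ y z ≤ G.δ x y + G.δ x z := by
        rw [← G.δ_symm y x]; exact G.δ_triangle y x z
      exact absurd hyz (lt_of_le_of_lt h
        (ENNReal.add_lt_top.mpr ⟨Ne.lt_top hxy, Ne.lt_top hxz⟩)).ne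
    · -- all finite
      rw [if_neg hxz, if_neg hxy, if_neg hyz, ← map_add]
      apply lof_mono
      exact ENNReal.toReal_le_add (G.δ_triangle x y z) hxy hyz
  · intro x y h
    dsimp only
    rw [if_neg h, sub_self]
    intro r hr
    rw [abs_zero]
    exact lof_pos f hr
  · intro x y
    dsimp only
    by_cases h : G.δ x y = ⊤
    · rw [if_pos h]
      have h1 : IsLimited f (σ (T x y) - T x y) := by
        have := lim_neg f (hσ_lim (T x y))
        simpa using this
      have h2 := hT_sub_Δ x y
      have he : σ (T x y) - G.Δ x y = (σ (T x y) - T x y) + (T x y - G.Δ x y) := by ring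
      rw [he]
      exact lim_add f h1 h2
    · rw [if_neg h]
      exact lim_sub f (lim_map f _) ((G.Δ_limited_iff x y).mpr h)
end

section
/- For every scale α : ℝ* with 0 < α, there is a well-defined map δ_α : X_α → X_α → ℝ≥0∞ such that for all x y : *X, δ_α (π_α x) (π_α y) = ⊤ if α * *d x y is infinite, and δ_α (π_α x) (π_α y) = ENNReal.ofReal (st (α * *d x y)) otherwise; moreover δ_α is a generalized distance: δ_α ξ ξ = 0, δ_α ξ η = δ_α η ξ > 0 for ξ ≠ η, and δ_α ξ ζ ≤ δ_α ξ η + δ_α η ζ. -/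
open Filter Hyperreal ENNReal

/-- The germ-wise extension of the distance of a metric space to the germ space
`*X = ((hyperfilter ℕ : Filter ℕ)).Germ X`, with values in the hyperreals. -/
noncomputable def hdist {X : Type*} [MetricSpace X]
    (x y : ((hyperfilter ℕ : Filter ℕ)).Germ X) : ℝ* :=
  Filter.Germ.map₂ dist x y

/-- The relation `x ≈_α y`: `α * *d x y` is infinitesimal. -/
def scaleRel {X : Type*} [MetricSpace X] (α : ℝ*)
    (x y : ((hyperfilter ℕ : Filter ℕ)).Germ X) : Prop :=
  Infinitesimal (α * hdist x y)

/-- The `α`-scaling `X_α` of `X`: the quotient of `*X` by `≈_α`. -/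
def Scaled (X : Type*) [MetricSpace X] (α : ℝ*) : Type _ :=
  Quot (scaleRel (X := X) α)

/-- The canonical projection `π_α : *X → X_α`. -/
def scaleProj {X : Type*} [MetricSpace X] (α : ℝ*)
    (x : ((hyperfilter ℕ : Filter ℕ)).Germ X) : Scaled X α :=
  Quot.mk (scaleRel α) x

lemma hdist_nonneg {X : Type*} [MetricSpace X]
    (x y : ((hyperfilter ℕ : Filter ℕ)).Germ X) : 0 ≤ hdist x y := by
  induction x using Filter.Germ.inductionOn with | h f =>
  induction y using Filter.Germ.inductionOn with | h g =>
  rw [hdist, Filter.Germ.map₂_coe]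
  exact Filter.Germ.coe_le.mpr (Eventually.of_forall fun n => dist_nonneg)

lemma hdist_self {X : Type*} [MetricSpace X]
    (x : ((hyperfilter ℕ : Filter ℕ)).Germ X) : hdist x x = 0 := by
  induction x using Filter.Germ.inductionOn with | h f =>
  rw [hdist, Filter.Germ.map₂_coe]
  exact Filter.Germ.coe_eq.mpr (Eventually.of_forall fun n => dist_self _)

lemma hdist_comm {X : Type*} [MetricSpace X]
    (x y : ((hyperfilter ℕ : Filter ℕ)).Germ X) : hdist x y = hdist y x := by
  induction x using Filter.Germ.inductionOn with | h f =>
  induction y using Filter.Germ.inductionOn with | h g =>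
  rw [hdist, hdist, Filter.Germ.map₂_coe, Filter.Germ.map₂_coe]
  exact Filter.Germ.coe_eq.mpr (Eventually.of_forall fun n => dist_comm _ _)

lemma hdist_triangle {X : Type*} [MetricSpace X]
    (x y z : ((hyperfilter ℕ : Filter ℕ)).Germ X) : hdist x z ≤ hdist x y + hdist y z := by
  induction x using Filter.Germ.inductionOn with | h f =>
  induction y using Filter.Germ.inductionOn with | h g =>
  induction z using Filter.Germ.inductionOn with | h k =>
  rw [hdist, hdist, hdist, Filter.Germ.map₂_coe, Filter.Germ.map₂_coe, Filter.Germ.map₂_coe]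
  exact (Hyperreal.ofSeq_le_ofSeq (f := fun n => dist (f n) (k n))
    (g := fun n => dist (f n) (g n) + dist (g n) (k n))).mpr
    (Eventually.of_forall fun n => dist_triangle _ _ _)

lemma st_nonneg' {a : ℝ*} (h0 : 0 ≤ a) (hni : ¬Infinite a) : 0 ≤ st a := by
  have := st_le_of_le not_infinite_zero hni h0
  rwa [show st (0 : ℝ*) = 0 from by rw [← Hyperreal.coe_zero, st_id_real]] at this

lemma not_infinite_between {a b : ℝ*} (h0 : 0 ≤ a) (hab : a ≤ b) (hb : ¬Infinite b) :
    ¬Infinite a := by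
  obtain ⟨r, s, _, hs⟩ := not_infinite_iff_exist_lt_gt.mp hb
  refine not_infinite_iff_exist_lt_gt.mpr ⟨-1, s, ?_, lt_of_le_of_lt hab hs⟩
  calc ((-1 : ℝ) : ℝ*) < 0 := by
        rw [← Hyperreal.coe_zero]; exact_mod_cast (by norm_num : (-1:ℝ) < 0)
    _ ≤ a := h0


section
variable {X : Type*} [MetricSpace X] (α : ℝ*)

open Classical in
private noncomputable def preD (x y : ((hyperfilter ℕ : Filter ℕ)).Germ X) : ℝ≥0∞ :=
  if Infinite (α * hdist x y) then ⊤ else ENNReal.ofReal (st (α * hdist x y))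

variable (hα : 0 < α)
include hα

private lemma A_nonneg (x y : ((hyperfilter ℕ : Filter ℕ)).Germ X) :
    0 ≤ α * hdist x y := mul_nonneg hα.le (hdist_nonneg x y)

private lemma A_tri (x y z : ((hyperfilter ℕ : Filter ℕ)).Germ X) :
    α * hdist x z ≤ α * hdist x y + α * hdist y z := by
  rw [← mul_add]
  exact mul_le_mul_of_nonneg_left (hdist_triangle x y z) hα.le

private lemma key {x y z : ((hyperfilter ℕ : Filter ℕ)).Germ X}
    (hy : ¬Infinite (α * hdist x y)) (hz : ¬Infinite (α * hdist y z)) :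
    ¬Infinite (α * hdist x z) ∧
      st (α * hdist x z) ≤ st (α * hdist x y) + st (α * hdist y z) := by
  have hni := not_infinite_between (A_nonneg α hα x z) (A_tri α hα x y z)
      (not_infinite_add hy hz)
  exact ⟨hni, by
    rw [← st_add hy hz]
    exact st_le_of_le hni (not_infinite_add hy hz) (A_tri α hα x y z)⟩

omit hα in
private lemma preD_comm (x y : ((hyperfilter ℕ : Filter ℕ)).Germ X) :
    preD α x y = preD α y x := by rw [preD, preD, hdist_comm]

private lemma preD_wd {x x' : ((hyperfilter ℕ : Filter ℕ)).Germ X}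
    (h : scaleRel α x x') (y : ((hyperfilter ℕ : Filter ℕ)).Germ X) :
    preD α x y = preD α x' y := by
  have hε : ¬Infinite (α * hdist x x') := h.not_infinite
  have hε' : ¬Infinite (α * hdist x' x) := by rwa [hdist_comm]
  have hst : st (α * hdist x x') = 0 := h.st_eq
  have hst' : st (α * hdist x' x) = 0 := by rwa [hdist_comm]
  rw [preD, preD]
  by_cases hI : Infinite (α * hdist x' y)
  · rw [if_pos hI, if_pos]
    by_contra hI2
    exact (key α hα hε' hI2).1 hI
  · obtain ⟨hni, hle⟩ := key α hα hε hI
    obtain ⟨_, hle'⟩ := key α hα hε' hni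
    rw [if_neg hI, if_neg hni]
    congr 1
    rw [hst] at hle; rw [hst'] at hle'
    simpa using le_antisymm (by simpa using hle) (by simpa using hle')
end

/-- There is a well-defined generalized distance `δ_α` on `X_α`. -/
theorem exists_scaled_dist {X : Type*} [MetricSpace X] (α : ℝ*) (hα : 0 < α) :
    ∃ δα : Scaled X α → Scaled X α → ℝ≥0∞,
      (∀ x y : ((hyperfilter ℕ : Filter ℕ)).Germ X,
        (Infinite (α * hdist x y) → δα (scaleProj α x) (scaleProj α y) = ⊤) ∧
        (¬ Infinite (α * hdist x y) →
          δα (scaleProj α x) (scaleProj α y) = ENNReal.ofReal (st (α * hdist x y)))) ∧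
      (∀ ξ : Scaled X α, δα ξ ξ = 0) ∧
      (∀ ξ η : Scaled X α, ξ ≠ η → δα ξ η = δα η ξ ∧ 0 < δα ξ η) ∧
      (∀ ξ η ζ : Scaled X α, δα ξ ζ ≤ δα ξ η + δα η ζ) := by
  refine ⟨Quot.lift₂ (preD α)
    (fun a b₁ b₂ h => by rw [preD_comm α a b₁, preD_comm α a b₂, preD_wd α hα h])
    (fun a₁ a₂ b h => preD_wd α hα h b), ?_, ?_, ?_, ?_⟩
  · intro x y
    constructor
    · intro h
      show preD α x y = ⊤
      rw [preD, if_pos h]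
    · intro h
      show preD α x y = ENNReal.ofReal (st (α * hdist x y))
      rw [preD, if_neg h]
  · intro ξ
    induction ξ using Quot.ind with | mk x =>
    show preD α x x = 0
    rw [preD, hdist_self, mul_zero, if_neg not_infinite_zero,
      show st (0 : ℝ*) = 0 from by rw [← Hyperreal.coe_zero, st_id_real]]
    simp
  · intro ξ η hne
    induction ξ using Quot.ind with | mk x =>
    induction η using Quot.ind with | mk y =>
    refine ⟨preD_comm α x y, ?_⟩
    show 0 < preD α x y
    rw [pos_iff_ne_zero]
    intro h0
    rw [preD] at h0
    by_cases hI : Infinite (α * hdist x y)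
    · rw [if_pos hI] at h0; exact absurd h0 top_ne_zero
    · rw [if_neg hI, ENNReal.ofReal_eq_zero] at h0
      have hst : st (α * hdist x y) = 0 :=
        le_antisymm h0 (st_nonneg' (A_nonneg α hα x y) hI)
      have : Infinitesimal (α * hdist x y) := by have h := isSt_st' hI; rwa [hst] at h
      exact hne (Quot.sound this)
  · intro ξ η ζ
    induction ξ using Quot.ind with | mk x =>
    induction η using Quot.ind with | mk y =>
    induction ζ using Quot.ind with | mk z =>
    show preD α x z ≤ preD α x y + preD α y z
    by_cases hy : Infinite (α * hdist x y)
    · rw [show preD α x y = ⊤ from by rw [preD, if_pos hy]]; simp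
    by_cases hz : Infinite (α * hdist y z)
    · rw [show preD α y z = ⊤ from by rw [preD, if_pos hz]]; simp
    obtain ⟨hni, hle⟩ := key α hα hy hz
    rw [preD, preD, preD, if_neg hy, if_neg hz, if_neg hni,
      ← ENNReal.ofReal_add (st_nonneg' (A_nonneg α hα x y) hy)
        (st_nonneg' (A_nonneg α hα y z) hz)]
    exact ENNReal.ofReal_le_ofReal hle
end

section
/- (Transitions between nonstandard scalings.) Let α β : ℝ* with 0 < β ≤ α. Then there exists a unique map π_{β,α} : X_α → X_β such that π_β = π_{β,α} ∘ π_α; this map is surjective; for all x y : *X with δ_α (π_α x) (π_α y) ≠ ⊤, one has δ_β (π_β x) (π_β y) = ENNReal.ofReal (st (β/α) * (δ_α (π_α x) (π_α y)).toReal); and for 0 < γ ≤ β ≤ α one has π_{γ,α} = π_{γ,β} ∘ π_{β,α}. -/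
open Filter Hyperreal ENNReal

lemma scaleRel_mono {X : Type*} [MetricSpace X] {γ β : ℝ*} (hγ : 0 < γ) (hγβ : γ ≤ β)
    {x y : ((hyperfilter ℕ : Filter ℕ)).Germ X} (h : scaleRel β x y) : scaleRel γ x y := by
  have hd := hdist_nonneg x y
  have h1 : 0 ≤ γ * hdist x y := mul_nonneg hγ.le hd
  have h2 : γ * hdist x y ≤ β * hdist x y := mul_le_mul_of_nonneg_right hγβ hd
  refine infinitesimal_def.mpr fun r hr => ?_
  constructor
  · exact lt_of_lt_of_le (by exact_mod_cast neg_neg_of_pos (by exact_mod_cast hr)) h1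
  · exact lt_of_le_of_lt h2 ((infinitesimal_def.mp h) r hr).2

/-- Transitions between nonstandard scalings: for `0 < β ≤ α` there is a unique map
`π_{β,α} : X_α → X_β` with `π_β = π_{β,α} ∘ π_α`; it is surjective, contracts the
generalized distance by the factor `st (β/α)`, and these transition maps compose. -/
theorem scaling_transition {X : Type*} [MetricSpace X]
    (α β : ℝ*) (hβ : 0 < β) (hβα : β ≤ α)
    (δα : Scaled X α → Scaled X α → ℝ≥0∞) (δβ : Scaled X β → Scaled X β → ℝ≥0∞)
    (hδα : ∀ x y : ((hyperfilter ℕ : Filter ℕ)).Germ X,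
      (Infinite (α * hdist x y) → δα (scaleProj α x) (scaleProj α y) = ⊤) ∧
      (¬ Infinite (α * hdist x y) →
        δα (scaleProj α x) (scaleProj α y) = ENNReal.ofReal (st (α * hdist x y))))
    (hδβ : ∀ x y : ((hyperfilter ℕ : Filter ℕ)).Germ X,
      (Infinite (β * hdist x y) → δβ (scaleProj β x) (scaleProj β y) = ⊤) ∧
      (¬ Infinite (β * hdist x y) →
        δβ (scaleProj β x) (scaleProj β y) = ENNReal.ofReal (st (β * hdist x y)))) :
    (∃! h : Scaled X α → Scaled X β,
      ∀ x : ((hyperfilter ℕ : Filter ℕ)).Germ X, h (scaleProj α x) = scaleProj β x) ∧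
    (∀ h : Scaled X α → Scaled X β,
      (∀ x, h (scaleProj α x) = scaleProj β x) → Function.Surjective h) ∧
    (∀ x y : ((hyperfilter ℕ : Filter ℕ)).Germ X,
      δα (scaleProj α x) (scaleProj α y) ≠ ⊤ →
      δβ (scaleProj β x) (scaleProj β y) =
        ENNReal.ofReal (st (β / α) * (δα (scaleProj α x) (scaleProj α y)).toReal)) ∧
    (∀ γ : ℝ*, 0 < γ → γ ≤ β →
      ∀ (hγα : Scaled X α → Scaled X γ) (hγβ : Scaled X β → Scaled X γ)
        (hβα' : Scaled X α → Scaled X β),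
        (∀ x, hγα (scaleProj α x) = scaleProj γ x) →
        (∀ x, hγβ (scaleProj β x) = scaleProj γ x) →
        (∀ x, hβα' (scaleProj α x) = scaleProj β x) →
        hγα = hγβ ∘ hβα') := by
  have hα : 0 < α := lt_of_lt_of_le hβ hβα
  refine ⟨?_, ?_, ?_, ?_⟩
  · refine ⟨Quot.lift (fun x => scaleProj β x)
      (fun a b hab => Quot.sound (scaleRel_mono hβ hβα hab)), fun x => rfl, ?_⟩
    intro g hg
    funext z
    obtain ⟨x, rfl⟩ := Quot.exists_rep z
    exact hg x
  · intro h hh z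
    obtain ⟨x, rfl⟩ := Quot.exists_rep z
    exact ⟨scaleProj α x, hh x⟩
  · intro x y hne
    have hA : ¬ Infinite (α * hdist x y) := by
      intro hi; exact hne ((hδα x y).1 hi)
    have hd := hdist_nonneg x y
    have hfrac : β * hdist x y = (β / α) * (α * hdist x y) := by
      field_simp
    have hfracni : ¬ Infinite (β / α) := by
      rw [not_infinite_iff_exist_lt_gt]
      refine ⟨-1, 2, ?_, ?_⟩
      · calc ((-1 : ℝ) : ℝ*) < 0 := by norm_num
          _ ≤ β / α := div_nonneg hβ.le hα.le
      · calc β / α ≤ 1 := (div_le_one hα).mpr hβα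
          _ < ((2 : ℝ) : ℝ*) := by norm_num
    have hB : ¬ Infinite (β * hdist x y) := by
      rw [hfrac]; exact not_infinite_mul hfracni hA
    rw [(hδβ x y).2 hB, (hδα x y).2 hA, hfrac, st_mul hfracni hA]
    congr 1
    congr 1
    rw [ENNReal.toReal_ofReal]
    have h0 : (0 : ℝ) = st ((0 : ℝ) : ℝ*) := (st_id_real 0).symm
    rw [h0]
    exact st_le_of_le (not_infinite_real 0) hA (mul_nonneg hα.le hd)
  · intro γ hγ hγβ hγα hγβ' hβα' h1 h2 h3
    funext z
    obtain ⟨x, rfl⟩ := Quot.exists_rep z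
    show hγα (scaleProj α x) = hγβ' (hβα' (scaleProj α x))
    rw [h1, h3, h2]
end

section
/- Let α β : ℝ* with 0 < β ≤ α and suppose β/α is not infinitesimal. Then the equivalence relations ≈_α and ≈_β on *X coincide (for all x y : *X, α * *d x y is infinitesimal if and only if β * *d x y is infinitesimal); consequently the transition map π_{β,α} : X_α → X_β is a bijection, and it is a homeomorphism for the topologies on X_α and X_β induced by the extended distances δ_α and δ_β. -/
open Filter Hyperreal ENNReal

open Topology TopologicalSpace

/-- If `β/α` is not infinitesimal (with `0 < β ≤ α`), the relations `≈_α` and `≈_β`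
coincide and the transition map `π_{β,α} : X_α → X_β` is a homeomorphism for the
topologies induced by the generalized distances `δ_α` and `δ_β`. -/
theorem scaling_transition_homeomorph {X : Type*} [MetricSpace X]
    (α β : ℝ*) (hβ : 0 < β) (hβα : β ≤ α) (hni : ¬ Infinitesimal (β / α))
    (δα : Scaled X α → Scaled X α → ℝ≥0∞) (δβ : Scaled X β → Scaled X β → ℝ≥0∞)
    (hδα : ∀ x y : ((hyperfilter ℕ : Filter ℕ)).Germ X,
      (Infinite (α * hdist x y) → δα (scaleProj α x) (scaleProj α y) = ⊤) ∧
      (¬ Infinite (α * hdist x y) →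
        δα (scaleProj α x) (scaleProj α y) = ENNReal.ofReal (st (α * hdist x y))))
    (hδβ : ∀ x y : ((hyperfilter ℕ : Filter ℕ)).Germ X,
      (Infinite (β * hdist x y) → δβ (scaleProj β x) (scaleProj β y) = ⊤) ∧
      (¬ Infinite (β * hdist x y) →
        δβ (scaleProj β x) (scaleProj β y) = ENNReal.ofReal (st (β * hdist x y)))) :
    (∀ x y : ((hyperfilter ℕ : Filter ℕ)).Germ X,
      Infinitesimal (α * hdist x y) ↔ Infinitesimal (β * hdist x y)) ∧
    (∀ h : Scaled X α → Scaled X β,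
      (∀ x, h (scaleProj α x) = scaleProj β x) →
      Function.Bijective h ∧
      (∀ s : Set (Scaled X β),
        IsOpen[generateFrom {B : Set (Scaled X β) | ∃ c r, B = {y | δβ c y < r}}] s ↔
        IsOpen[generateFrom {B : Set (Scaled X α) | ∃ c r, B = {y | δα c y < r}}]
          (h ⁻¹' s))) := by
  have hα : 0 < α := lt_of_lt_of_le hβ hβα
  have hα0 : α ≠ 0 := ne_of_gt hα
  have hβ0 : β ≠ 0 := ne_of_gt hβ
  set q : ℝ* := β / α with hq
  have hq0 : 0 < q := div_pos hβ hα
  have hq1 : q ≤ 1 := (div_le_one hα).mpr hβα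
  have hqni : ¬ Infinite q := by
    refine not_infinite_iff_exist_lt_gt.mpr ⟨-1, 2, ?_, ?_⟩
    · calc ((-1 : ℝ) : ℝ*) < 0 := by norm_num
        _ < q := hq0
    · calc q ≤ 1 := hq1
        _ < ((2 : ℝ) : ℝ*) := by norm_num
  have hqIsSt : IsSt q (st q) := isSt_st' hqni
  set t : ℝ := st q with htdef
  have ht0 : 0 ≤ t := by
    have h0 : IsSt (0 : ℝ*) 0 := by simpa using isSt_refl_real 0
    exact h0.le hqIsSt hq0.le
  have htne : t ≠ 0 := fun h => hni (show IsSt q 0 by rw [← h]; exact hqIsSt)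
  have htpos : 0 < t := lt_of_le_of_ne ht0 (Ne.symm htne)
  have hmulid : ∀ z : ℝ*, β * z = q * (α * z) := fun z => by
    rw [hq]; field_simp
  have hinvid : ∀ z : ℝ*, α * z = q⁻¹ * (β * z) := fun z => by
    rw [hq]; field_simp
  have hqinv_ni : ¬ Infinite q⁻¹ := fun hInf =>
    hni (by simpa using infinitesimal_inv_of_infinite hInf)
  have hqinv_nis : ¬ Infinitesimal q⁻¹ := fun h' =>
    hqni (by simpa using (infinitesimal_iff_infinite_inv (inv_ne_zero hq0.ne')).mp h')
  have key : ∀ x y : ((hyperfilter ℕ : Filter ℕ)).Germ X,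
      Infinitesimal (α * hdist x y) ↔ Infinitesimal (β * hdist x y) := by
    intro x y
    constructor
    · intro hxy
      show IsSt (β * hdist x y) 0
      rw [hmulid (hdist x y)]
      simpa using hqIsSt.mul hxy
    · intro hxy
      show IsSt (α * hdist x y) 0
      rw [hinvid (hdist x y)]
      simpa using (isSt_st' hqinv_ni).mul hxy
  have keyInf : ∀ x y : ((hyperfilter ℕ : Filter ℕ)).Germ X,
      Infinite (α * hdist x y) ↔ Infinite (β * hdist x y) := by
    intro x y
    constructor
    · intro hxy
      rw [hmulid (hdist x y), mul_comm]
      exact infinite_mul_of_infinite_not_infinitesimal hxy hni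
    · intro hxy
      rw [hinvid (hdist x y), mul_comm]
      exact infinite_mul_of_infinite_not_infinitesimal hxy hqinv_nis
  have hT0 : (ENNReal.ofReal t) ≠ 0 := (ENNReal.ofReal_pos.mpr htpos).ne'
  have hTtop : ENNReal.ofReal t ≠ ⊤ := ENNReal.ofReal_ne_top
  have hδrel : ∀ x y : ((hyperfilter ℕ : Filter ℕ)).Germ X,
      δβ (scaleProj β x) (scaleProj β y)
        = ENNReal.ofReal t * δα (scaleProj α x) (scaleProj α y) := by
    intro x y
    by_cases hI : Infinite (α * hdist x y)
    · rw [(hδβ x y).1 ((keyInf x y).mp hI), (hδα x y).1 hI, ENNReal.mul_top hT0]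
    · have hIb : ¬ Infinite (β * hdist x y) := fun h' => hI ((keyInf x y).mpr h')
      rw [(hδβ x y).2 hIb, (hδα x y).2 hI, hmulid (hdist x y),
        st_mul hqni hI, ENNReal.ofReal_mul ht0]
  refine ⟨key, ?_⟩
  intro h hcomm
  have hsurjα : ∀ a : Scaled X α, ∃ x, scaleProj α x = a := fun a => Quot.exists_rep a
  have hsurjβ : ∀ b : Scaled X β, ∃ x, scaleProj β x = b := fun b => Quot.exists_rep b
  have hinj : Function.Injective h := by
    intro a b hab
    obtain ⟨x, rfl⟩ := hsurjα a
    obtain ⟨y, rfl⟩ := hsurjα b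
    rw [hcomm, hcomm] at hab
    have hgen : Relation.EqvGen (scaleRel β) x y := Quot.eq.mp hab
    exact Quot.eq.mpr (hgen.mono fun u v huv => (key u v).mpr huv)
  have hsurj : Function.Surjective h := fun b => by
    obtain ⟨x, rfl⟩ := hsurjβ b
    exact ⟨scaleProj α x, hcomm x⟩
  refine ⟨⟨hinj, hsurj⟩, ?_⟩
  have hball1 : ∀ (c : Scaled X β) (r : ℝ≥0∞),
      ∃ c' r', h ⁻¹' {y | δβ c y < r} = {y | δα c' y < r'} := by
    intro c r
    obtain ⟨x0, rfl⟩ := hsurjβ c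
    refine ⟨scaleProj α x0, r / ENNReal.ofReal t, ?_⟩
    ext a
    obtain ⟨y, rfl⟩ := hsurjα a
    simp only [Set.mem_preimage, Set.mem_setOf_eq, hcomm]
    rw [hδrel x0 y, ENNReal.lt_div_iff_mul_lt (Or.inl hT0) (Or.inl hTtop), mul_comm]
  have hball2 : ∀ (c : Scaled X α) (r : ℝ≥0∞),
      h '' {y | δα c y < r} = {y | δβ (h c) y < ENNReal.ofReal t * r} := by
    intro c r
    obtain ⟨x0, rfl⟩ := hsurjα c
    ext b
    constructor
    · rintro ⟨a, ha, rfl⟩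
      obtain ⟨y, rfl⟩ := hsurjα a
      simp only [Set.mem_setOf_eq] at ha ⊢
      rw [hcomm, hcomm, hδrel]
      exact (ENNReal.mul_lt_mul_iff_right hT0 hTtop).mpr ha
    · intro hb
      obtain ⟨y, rfl⟩ := hsurjβ b
      refine ⟨scaleProj α y, ?_, hcomm y⟩
      simp only [Set.mem_setOf_eq] at hb ⊢
      rw [hcomm] at hb
      rw [hδrel] at hb
      exact (ENNReal.mul_lt_mul_iff_right hT0 hTtop).mp hb
  intro s
  have fwd : ∀ u : Set (Scaled X β),
      GenerateOpen {B : Set (Scaled X β) | ∃ c r, B = {y | δβ c y < r}} u →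
      GenerateOpen {B : Set (Scaled X α) | ∃ c r, B = {y | δα c y < r}} (h ⁻¹' u) := by
    intro u hu
    induction hu with
    | basic v hv =>
      obtain ⟨c, r, rfl⟩ := hv
      obtain ⟨c', r', he⟩ := hball1 c r
      rw [he]
      exact .basic _ ⟨c', r', rfl⟩
    | univ => rw [Set.preimage_univ]; exact .univ
    | inter v w _ _ ihv ihw => rw [Set.preimage_inter]; exact .inter _ _ ihv ihw
    | sUnion S _ ih =>
      rw [Set.preimage_sUnion, ← Set.sUnion_image]
      refine .sUnion _ ?_
      rintro v ⟨w, hw, rfl⟩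
      exact ih w hw
  have bwd : ∀ u : Set (Scaled X α),
      GenerateOpen {B : Set (Scaled X α) | ∃ c r, B = {y | δα c y < r}} u →
      GenerateOpen {B : Set (Scaled X β) | ∃ c r, B = {y | δβ c y < r}} (h '' u) := by
    intro u hu
    induction hu with
    | basic v hv =>
      obtain ⟨c, r, rfl⟩ := hv
      rw [hball2 c r]
      exact .basic _ ⟨h c, ENNReal.ofReal t * r, rfl⟩
    | univ =>
      rw [Set.image_univ, Set.range_eq_univ.mpr hsurj]
      exact .univ
    | inter v w _ _ ihv ihw =>
      rw [Set.image_inter hinj]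
      exact .inter _ _ ihv ihw
    | sUnion S _ ih =>
      rw [Set.image_sUnion]
      refine .sUnion _ ?_
      rintro v ⟨w, hw, rfl⟩
      exact ih w hw
  constructor
  · intro hs
    exact fwd s hs
  · intro hs
    have := bwd _ hs
    rwa [Set.image_preimage_eq s hsurj] at this
end

section
/- (Gromov–Hausdorff limits and nonstandard scalings.) Let (X, d) and (F, d_F) be metric spaces, let λ : ℕ → ℝ with λ n > 0 for all n and λ n → 0, and suppose (X, λ_n d) converges to (F, d_F) in the Gromov–Hausdorff sense; concretely, assume there are ε : ℕ → ℝ with ε n > 0 and ε n → 0, and maps δ : ℕ → X → F → ℝ with δ n x y ≥ 0, such that for all n, all x x' : X and all y y' : F: δ n x y ≤ λ n * d x x' + δ n x' y; δ n x y ≤ δ n x y' + d_F y' y; λ n * d x x' ≤ δ n x y + δ n x' y; d_F y y' ≤ δ n x y + δ n x y'; and: for every x : X there is y : F with δ n x y < ε n, and for every y : F there is x : X with δ n x y < ε n. Let ν : ((hyperfilter ℕ : Filter ℕ)).Germ ℕ be infinitely large (for every m : ℕ, the constant germ of m is < ν) and set λ_ν := ν.map λ : ℝ*. Then there exists a map φ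 : *X → *F such that: (i) for all x y : *X, the hyperreal λ_ν * *d x y - *d_F (φ x) (φ y) is not infinite; (ii) for all x y : *X, if λ_ν * *d x y is not infinite then λ_ν * *d x y - *d_F (φ x) (φ y) is infinitesimal; and (iii) for every z : *F there exists x : *X with *d_F (φ x) z infinitesimal. (Hence φ induces an isometry of galactic spaces between the λ_ν-scaling of X and the 1-scaling of F.) -/
open Filter Hyperreal

/-- `ν.map lam`, regarded as a hyperreal (`λ_ν`). -/
noncomputable def germMapR (ν : ((hyperfilter ℕ : Filter ℕ)).Germ ℕ) (lam : ℕ → ℝ) : ℝ* :=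
  ν.map lam

/-- Gromov–Hausdorff limits and nonstandard scalings: if `(X, λ_n d)` converges to
`(F, d_F)` in the Gromov–Hausdorff sense and `ν` is an infinitely large hypernatural,
then there is a map `φ : *X → *F` inducing an isometry of galactic spaces between
the `λ_ν`-scaling of `X` and the `1`-scaling of `F`. -/
theorem gromov_hausdorff_scaling {X F : Type*} [MetricSpace X] [MetricSpace F]
    (lam : ℕ → ℝ) (hlam : ∀ n, 0 < lam n)
    (hlam0 : Filter.Tendsto lam Filter.atTop (nhds 0))
    (eps : ℕ → ℝ) (heps : ∀ n, 0 < eps n)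
    (heps0 : Filter.Tendsto eps Filter.atTop (nhds 0))
    (δ : ℕ → X → F → ℝ) (hδ0 : ∀ n x y, 0 ≤ δ n x y)
    (h1 : ∀ n (x x' : X) (y : F), δ n x y ≤ lam n * dist x x' + δ n x' y)
    (h2 : ∀ n (x : X) (y y' : F), δ n x y ≤ δ n x y' + dist y' y)
    (h3 : ∀ n (x x' : X) (y : F), lam n * dist x x' ≤ δ n x y + δ n x' y)
    (h4 : ∀ n (x : X) (y y' : F), dist y y' ≤ δ n x y + δ n x y')
    (h5 : ∀ n (x : X), ∃ y : F, δ n x y < eps n)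
    (h6 : ∀ n (y : F), ∃ x : X, δ n x y < eps n)
    (ν : ((hyperfilter ℕ : Filter ℕ)).Germ ℕ)
    (hν : ∀ m : ℕ, (↑m : ((hyperfilter ℕ : Filter ℕ)).Germ ℕ) < ν) :
    ∃ φ : ((hyperfilter ℕ : Filter ℕ)).Germ X → ((hyperfilter ℕ : Filter ℕ)).Germ F,
      (∀ x y, ¬ Infinite (germMapR ν lam * hdist x y - hdist (φ x) (φ y))) ∧
      (∀ x y, ¬ Infinite (germMapR ν lam * hdist x y) →
        Infinitesimal (germMapR ν lam * hdist x y - hdist (φ x) (φ y))) ∧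
      (∀ z, ∃ x, Infinitesimal (hdist (φ x) z)) := by
  classical
  choose f hf using h5
  choose g hg using h6
  -- the map on germs
  refine ⟨fun x => Filter.Germ.map₂ f ν x, ?_⟩
  -- eventual smallness of `eps ∘ u` for any representative u of ν
  have hev : ∀ (u : ℕ → ℕ), ((u : ((hyperfilter ℕ : Filter ℕ)).Germ ℕ) = ν) →
      ∀ r : ℝ, 0 < r → ∀ᶠ n in (hyperfilter ℕ : Filter ℕ), 2 * eps (u n) < r := by
    intro u hu r hr
    obtain ⟨N, hN⟩ := (Metric.tendsto_atTop.mp heps0 (r / 2) (by linarith)).imp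
      (fun N h m hm => h m hm)
    have hlt : (↑N : ((hyperfilter ℕ : Filter ℕ)).Germ ℕ) < (u : _) := hu ▸ hν N
    have := Filter.Germ.coe_lt.mp hlt
    filter_upwards [this] with n hn
    have h' : N ≤ u n := le_of_lt (by simpa using hn)
    have h2 := hN (u n) h'
    rw [Real.dist_eq, sub_zero, abs_of_pos (heps _)] at h2
    linarith
  -- key pointwise estimate
  have hpt : ∀ m (a a' : X),
      |lam m * dist a a' - dist (f m a) (f m a')| < 2 * eps m := by
    intro m a a'
    have hA := hf m a
    have hA' := hf m a'
    rw [abs_lt]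
    constructor
    · -- dist (f m a) (f m a') - lam m * dist a a' ≤ δ + δ
      have t1 := h4 m a (f m a) (f m a')
      have t2 := h1 m a a' (f m a')
      linarith
    · have t1 := h3 m a a' (f m a')
      have t2 := h2 m a (f m a') (f m a)
      linarith
  -- key: the difference is always infinitesimal
  have key : ∀ x y : ((hyperfilter ℕ : Filter ℕ)).Germ X,
      Infinitesimal (germMapR ν lam * hdist x y -
        hdist (Filter.Germ.map₂ f ν x) (Filter.Germ.map₂ f ν y)) := by
    intro x y
    rw [infinitesimal_def]
    intro r hr
    induction ν using Filter.Germ.inductionOn with | h u =>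
    induction x using Filter.Germ.inductionOn with | h a =>
    induction y using Filter.Germ.inductionOn with | h b =>
    have hev' := hev u rfl r hr
    have hD : germMapR ((u : ℕ → ℕ) : ((hyperfilter ℕ : Filter ℕ)).Germ ℕ) lam * hdist ((a : ℕ → X) : ((hyperfilter ℕ : Filter ℕ)).Germ X) ((b : ℕ → X) : ((hyperfilter ℕ : Filter ℕ)).Germ X) -
        hdist (Filter.Germ.map₂ f ((u : ℕ → ℕ) : ((hyperfilter ℕ : Filter ℕ)).Germ ℕ) ((a : ℕ → X) : ((hyperfilter ℕ : Filter ℕ)).Germ X)) (Filter.Germ.map₂ f ((u : ℕ → ℕ) : ((hyperfilter ℕ : Filter ℕ)).Germ ℕ) ((b : ℕ → X) : ((hyperfilter ℕ : Filter ℕ)).Germ X)) =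
        ((fun n => lam (u n) * dist (a n) (b n) -
          dist (f (u n) (a n)) (f (u n) (b n)) : ℕ → ℝ) :
          ((hyperfilter ℕ : Filter ℕ)).Germ ℝ) := by
      simp only [germMapR, hdist, Filter.Germ.map_coe, Filter.Germ.map₂_coe]
      rfl
    rw [hD]
    constructor
    · show ((fun _ => -r : ℕ → ℝ) : ((hyperfilter ℕ : Filter ℕ)).Germ ℝ) < _
      refine Filter.Germ.coe_lt.mpr ?_
      filter_upwards [hev'] with n hn
      have := hpt (u n) (a n) (b n)
      rw [abs_lt] at this
      linarith
    · show _ < ((fun _ => r : ℕ → ℝ) : ((hyperfilter ℕ : Filter ℕ)).Germ ℝ)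
      refine Filter.Germ.coe_lt.mpr ?_
      filter_upwards [hev'] with n hn
      have := hpt (u n) (a n) (b n)
      rw [abs_lt] at this
      linarith
  refine ⟨fun x y => (key x y).not_infinite, fun x y _ => key x y, ?_⟩
  -- surjectivity up to infinitesimals
  intro z
  induction ν using Filter.Germ.inductionOn with | h u =>
  induction z using Filter.Germ.inductionOn with | h c =>
  refine ⟨((fun n => g (u n) (c n) : ℕ → X) : ((hyperfilter ℕ : Filter ℕ)).Germ X), ?_⟩
  rw [infinitesimal_def]
  intro r hr
  have hev' := hev u rfl r hr
  have hD : hdist (Filter.Germ.map₂ f ((u : ℕ → ℕ) : ((hyperfilter ℕ : Filter ℕ)).Germ ℕ)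
      ((fun n => g (u n) (c n) : ℕ → X) : ((hyperfilter ℕ : Filter ℕ)).Germ X)) ((c : ℕ → F) : ((hyperfilter ℕ : Filter ℕ)).Germ F) =
      ((fun n => dist (f (u n) (g (u n) (c n))) (c n) : ℕ → ℝ) :
        ((hyperfilter ℕ : Filter ℕ)).Germ ℝ) := by
    simp only [hdist, Filter.Germ.map₂_coe]
    rfl
  rw [hD]
  have hbd : ∀ n, |dist (f (u n) (g (u n) (c n))) (c n)| < 2 * eps (u n) := by
    intro n
    set m := u n
    have t1 := h4 m (g m (c n)) (f m (g m (c n))) (c n)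
    have t2 := hf m (g m (c n))
    have t3 := hg m (c n)
    rw [abs_of_nonneg dist_nonneg]
    linarith
  constructor
  · show ((fun _ => -r : ℕ → ℝ) : ((hyperfilter ℕ : Filter ℕ)).Germ ℝ) < _
    refine Filter.Germ.coe_lt.mpr ?_
    filter_upwards [hev'] with n hn
    have := abs_lt.mp (hbd n)
    linarith
  · show _ < ((fun _ => r : ℕ → ℝ) : ((hyperfilter ℕ : Filter ℕ)).Germ ℝ)
    refine Filter.Germ.coe_lt.mpr ?_
    filter_upwards [hev'] with n hn
    have := abs_lt.mp (hbd n)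
    linarith
end
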